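/- Let D = ‖θ* − θ*s‖² ≥ 0, and define R(α) = α² D + (α²/m + (1−α)²/n)·d for α ∈ [0,1] with m, n ≥ 1 and d > 0. Then the minimizer α* = (d/n) / (D + d/m + d/n) lies in [0,1], and the minimal value is R(α*) = ((D + d/m)/(D + d/m + d/n)) · (d/n). In particular R(α*) < d/n strictly. -/

import Mathlib

lemma quad_min (S t : ℝ) (hS : 0 < S) (ht : 0 < t) (hts : t ≤ S) :
    (∀ α : ℝ, S * (t / S) ^ 2 - 2 * t * (t / S) + t ≤ S * α ^ 2 - 2 * t * α + t) ∧
    S * (t / S) ^ 2 - 2 * t * (t / S) + t = ((S - t) / S) * t ∧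
    S * (t / S) ^ 2 - 2 * t * (t / S) + t < t := by
  have hS0 : S ≠ 0 := ne_of_gt hS
  have hval : S * (t / S) ^ 2 - 2 * t * (t / S) + t = t - t ^ 2 / S := by
    field_simp; ring
  refine ⟨?_, ?_, ?_⟩
  · intro α
    have h := mul_nonneg hS.le (sq_nonneg (α - t / S))
    have hexp : S * (α - t / S) ^ 2 = S * α ^ 2 - 2 * t * α + t ^ 2 / S := by
      field_simp; ring
    rw [hval]
    nlinarith [h, hexp]
  · rw [hval]; field_simp
  · rw [hval]
    have : 0 < t ^ 2 / S := div_pos (pow_pos ht 2) hS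
    linarith

/-- Optimal weight for the Gaussian mean estimation risk
`R(α) = α² D + (α²/m + (1−α)²/n) d`. -/
theorem stmt_2 (D d m n : ℝ) (hD : 0 ≤ D) (hd : 0 < d) (hm : 1 ≤ m) (hn : 1 ≤ n)
    (R : ℝ → ℝ) (hR : ∀ α, R α = α ^ 2 * D + (α ^ 2 / m + (1 - α) ^ 2 / n) * d)
    (αstar : ℝ) (hαstar : αstar = (d / n) / (D + d / m + d / n)) :
    (0 ≤ αstar ∧ αstar ≤ 1) ∧
    (∀ α ∈ Set.Icc (0 : ℝ) 1, R αstar ≤ R α) ∧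
    R αstar = ((D + d / m) / (D + d / m + d / n)) * (d / n) ∧
    R αstar < d / n := by
  have hm0 : (0:ℝ) < m := lt_of_lt_of_le one_pos hm
  have hn0 : (0:ℝ) < n := lt_of_lt_of_le one_pos hn
  have hdn : 0 < d / n := div_pos hd hn0
  have hdm : 0 < d / m := div_pos hd hm0
  have hS : 0 < D + d / m + d / n := by linarith
  have hts : d / n ≤ D + d / m + d / n := by linarith
  have key : ∀ α, R α = (D + d / m + d / n) * α ^ 2 - 2 * (d / n) * α + d / n := by
    intro α
    rw [hR]
    field_simp
    ring
  obtain ⟨hmin, hval, hlt⟩ := quad_min (D + d / m + d / n) (d / n) hS hdn hts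
  refine ⟨⟨?_, ?_⟩, ?_, ?_, ?_⟩
  · rw [hαstar]; positivity
  · rw [hαstar, div_le_one hS]; linarith
  · intro α _
    rw [key, key, hαstar]
    exact hmin α
  · rw [key, hαstar, hval]
    congr 1
    congr 1
    ring
  · rw [key, hαstar]
    exact hlt
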